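/- Let p be an odd prime and let a, b ∈ ℤ/pℤ with a ≠ b. The polynomial g(x) = (b-a)·(y^{p-2} + y^{p-3} + ... + y^3 + y^2 + 2y + 1) + a, where y denotes (x-a)/(b-a) (i.e., y = (b-a)^{-1}(x-a)), represents the transposition (a b) on ℤ/pℤ; that is, g(a) = b, g(b) = a, and g(c) = c for every c ∈ ℤ/pℤ with c ≠ a and c ≠ b. -/
import Mathlib


open Polynomial

/-- For an odd prime `p` and distinct `a b : ℤ/pℤ`, the polynomial
`g(x) = (b-a)·((∑_{i=0}^{p-2} y^i) + y) + a` with `y = (b-a)⁻¹·(x-a)`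
represents the transposition `(a b)` on `ℤ/pℤ`. -/
theorem stmt_2 (p : ℕ) (hp : p.Prime) (hodd : Odd p) (a b : ZMod p) (hab : a ≠ b)
    (y g : Polynomial (ZMod p))
    (hy : y = C (b - a)⁻¹ * ((X : Polynomial (ZMod p)) - C a))
    (hg : g = C (b - a) * ((∑ i ∈ Finset.range (p - 1), y ^ i) + y) + C a) :
    g.eval a = b ∧ g.eval b = a ∧ ∀ c : ZMod p, c ≠ a → c ≠ b → g.eval c = c := by
  haveI := Fact.mk hp
  have hd : b - a ≠ 0 := sub_ne_zero.mpr (Ne.symm hab)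
  have hp2 := hp.two_le
  have heval : ∀ c : ZMod p, g.eval c =
      (b - a) * ((∑ i ∈ Finset.range (p - 1), ((b - a)⁻¹ * (c - a)) ^ i)
        + (b - a)⁻¹ * (c - a)) + a := by
    intro c
    simp [hg, hy, Polynomial.eval_finset_sum]
  refine ⟨?_, ?_, ?_⟩
  · rw [heval]
    have : (∑ i ∈ Finset.range (p - 1), ((b - a)⁻¹ * (a - a)) ^ i) = 1 := by
      rw [Finset.sum_eq_single_of_mem 0 (by simp; omega)]
      · simp
      · intro i _ hi
        simp [zero_pow hi]
    rw [this]
    simp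
  · rw [heval]
    have h1 : (b - a)⁻¹ * (b - a) = 1 := inv_mul_cancel₀ hd
    rw [h1]
    simp only [one_pow, Finset.sum_const, Finset.card_range, nsmul_eq_mul, mul_one]
    have : ((p - 1 : ℕ) : ZMod p) = -1 := by
      have : ((p : ℕ) : ZMod p) = 0 := ZMod.natCast_self p
      push_cast [Nat.cast_sub (by omega : 1 ≤ p)]
      simp
    rw [this]
    ring
  · intro c hca hcb
    rw [heval]
    set t : ZMod p := (b - a)⁻¹ * (c - a) with ht
    have ht0 : t ≠ 0 := by
      simp [ht, mul_ne_zero, inv_ne_zero hd, sub_ne_zero.mpr hca]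
    have ht1 : t ≠ 1 := by
      intro h
      apply hcb
      have : c - a = b - a := by
        have := congrArg (fun z => (b - a) * z) h
        simpa [ht, ← mul_assoc, mul_inv_cancel₀ hd] using this
      linear_combination this
    have hsum : (∑ i ∈ Finset.range (p - 1), t ^ i) = 0 := by
      rw [geom_sum_eq ht1]
      rw [ZMod.pow_card_sub_one_eq_one ht0]
      simp
    rw [hsum, zero_add, ht, ← mul_assoc, mul_inv_cancel₀ hd, one_mul]
    ring
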